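/- Let K ≥ 1, let N_1,…,N_K > 0 be the per-user noise-plus-jamming power levels, and let P > 0 be the total base-station power budget. Suppose η ∈ ℝ is a water level such that the powers p_k = max(η − N_k, 0) satisfy Σ_{k=1}^K p_k = P. Then (p_1,…,p_K) is optimal for the water-filling problem: for every (q_1,…,q_K) with q_k ≥ 0 for all k and Σ_{k=1}^K q_k ≤ P, it holds that Σ_{k=1}^K log₂(1 + q_k / N_k) ≤ Σ_{k=1}^K log₂(1 + p_k / N_k). -/

import Mathlib

/-- Optimality of the water-filling power allocation: if `p_k = max(η − N_k, 0)`
exhausts the power budget `P`, then `p` maximizes the sum-rate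
`Σ_k log₂(1 + p_k/N_k)` among all nonnegative allocations with total power at
most `P`. -/
theorem water_filling_optimality
    (K : ℕ) (hK : 1 ≤ K)
    (N : Fin K → ℝ) (hN : ∀ k, 0 < N k)
    (P : ℝ) (hP : 0 < P)
    (η : ℝ)
    (p : Fin K → ℝ) (hp : ∀ k, p k = max (η - N k) 0)
    (hsum : ∑ k, p k = P) :
    ∀ q : Fin K → ℝ, (∀ k, 0 ≤ q k) → (∑ k, q k) ≤ P →
      ∑ k, Real.logb 2 (1 + q k / N k) ≤ ∑ k, Real.logb 2 (1 + p k / N k) := by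
  intro q hq hqP
  have hc : (0:ℝ) < Real.log 2 := Real.log_pos (by norm_num)
  -- the water level is positive
  have hη : 0 < η := by
    by_contra h
    push_neg at h
    have hz : ∀ k, p k = 0 := fun k => by
      rw [hp k]; exact max_eq_right (by linarith [(hN k).le])
    simp [hz] at hsum
    linarith
  -- per-term gradient bound
  have key : ∀ k : Fin K,
      Real.logb 2 (1 + q k / N k) ≤
        Real.logb 2 (1 + p k / N k) + (q k - p k) / (η * Real.log 2) := by
    intro k
    have hNk := hN k
    have hpk : 0 ≤ p k := by rw [hp k]; exact le_max_right _ _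
    have ha : 0 < 1 + q k / N k := by have := hq k; positivity
    have hb : 0 < 1 + p k / N k := by positivity
    have hNp : 0 < N k + p k := by linarith
    have h1 : Real.log (1 + q k / N k) - Real.log (1 + p k / N k) ≤
        (q k - p k) / (N k + p k) := by
      have hdiv : 0 < (1 + q k / N k) / (1 + p k / N k) := by positivity
      have hlog := Real.log_le_sub_one_of_pos hdiv
      rw [Real.log_div ha.ne' hb.ne'] at hlog
      have heq : (1 + q k / N k) / (1 + p k / N k) - 1 = (q k - p k) / (N k + p k) := by
        field_simp
        ring
      linarith [heq ▸ hlog]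
    have h2 : (q k - p k) / (N k + p k) ≤ (q k - p k) / η := by
      rcases le_or_gt (η - N k) 0 with h | h
      · have hp0 : p k = 0 := by rw [hp k]; exact max_eq_right h
        rw [hp0, add_zero, sub_zero]
        have hηN : η ≤ N k := by linarith
        gcongr
        exact hq k
      · have hpe : p k = η - N k := by rw [hp k]; exact max_eq_left h.le
        rw [hpe]
        have : N k + (η - N k) = η := by ring
        rw [this]
    have h3 : Real.log (1 + q k / N k) - Real.log (1 + p k / N k) ≤ (q k - p k) / η :=
      h1.trans h2
    have h4 : (Real.log (1 + q k / N k) - Real.log (1 + p k / N k)) / Real.log 2 ≤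
        ((q k - p k) / η) / Real.log 2 := by gcongr
    rw [sub_div, div_div] at h4
    simp only [Real.logb]
    linarith
  calc ∑ k, Real.logb 2 (1 + q k / N k)
      ≤ ∑ k, (Real.logb 2 (1 + p k / N k) + (q k - p k) / (η * Real.log 2)) :=
        Finset.sum_le_sum (fun k _ => key k)
    _ = ∑ k, Real.logb 2 (1 + p k / N k) + (∑ k, q k - ∑ k, p k) / (η * Real.log 2) := by
        rw [Finset.sum_add_distrib, ← Finset.sum_div, Finset.sum_sub_distrib]
    _ ≤ ∑ k, Real.logb 2 (1 + p k / N k) := by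
        have hnum : ∑ k, q k - ∑ k, p k ≤ 0 := by rw [hsum]; linarith
        have := div_nonpos_of_nonpos_of_nonneg hnum (by positivity : (0:ℝ) ≤ η * Real.log 2)
        linarith
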